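/- arXiv:2309.16129 — 3 statements merged into one kernel-verified Lean document; each statement's English description precedes it below -/
import Mathlib

section
/- Under Conditions A1–A3, the mean embedding of the counterfactual outcome admits the doubly robust representation: E[ξ(Y¹)] = E[(A/π(X))·(ξ(Y) − β(X)) + β(X)], where both sides are Bochner integrals in H. -/
open MeasureTheory Filter Set Topology
open scoped ENNReal NNReal RealInnerProductSpace

section Aux
variable {Ω : Type*} {m m' mΩ : MeasurableSpace Ω} {P : Measure Ω} [IsFiniteMeasure P]

omit [IsFiniteMeasure P] in
lemma aux_tind_integrable {t : Set Ω} (ht : MeasurableSet t) {g : Ω → ℝ}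
    (hg : Integrable g P) :
    Integrable (fun ω => t.indicator (fun _ => (1:ℝ)) ω * g ω) P := by
  refine Integrable.bdd_mul hg
    ((stronglyMeasurable_const.indicator ht).aestronglyMeasurable) (c := 1) (Eventually.of_forall fun ω => ?_)
  by_cases h : ω ∈ t <;> simp [Set.indicator_of_mem, Set.indicator_of_notMem, h]


lemma aux_condexp_const_inner {H : Type*} [NormedAddCommGroup H] [InnerProductSpace ℝ H]
    [CompleteSpace H] (hm : m ≤ mΩ) {g : Ω → H}
    (hg : Integrable g P) (c : H) :
    (fun ω => ⟪c, (P[g|m]) ω⟫) =ᵐ[P] P[fun ω => ⟪c, g ω⟫|m] := by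
  haveI : IsFiniteMeasure (P.trim hm) := isFiniteMeasure_trim hm
  refine ae_eq_condExp_of_forall_setIntegral_eq hm (hg.const_inner c)
    (fun s _ _ => (integrable_condExp.const_inner c).integrableOn) (fun s hs hμs => ?_) ?_
  · rw [integral_inner integrable_condExp.integrableOn c, setIntegral_condExp hm hg hs,
      ← integral_inner hg.integrableOn c]
  · exact ((innerSL ℝ c).continuous.comp_stronglyMeasurable
      stronglyMeasurable_condExp).aestronglyMeasurable

set_option synthInstance.maxHeartbeats 1000000 in
lemma aux_condexp_pullout (hm : m ≤ mΩ) (hm' : m' ≤ mΩ)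
    {t : Set Ω} (ht : MeasurableSet t)
    (hsets : ∀ s : Set Ω, MeasurableSet[m'] s →
      (P[(s ∩ t).indicator (fun _ => (1 : ℝ)) | m]) =ᵐ[P] fun ω =>
        ((P[s.indicator (fun _ => (1 : ℝ)) | m]) ω) *
        ((P[t.indicator (fun _ => (1 : ℝ)) | m]) ω))
    {f : Ω → ℝ} (hfm : StronglyMeasurable[m'] f) (hf : Integrable f P) :
    (P[fun ω => t.indicator (fun _ => (1 : ℝ)) ω * f ω | m]) =ᵐ[P]
      fun ω => ((P[t.indicator (fun _ => (1 : ℝ)) | m]) ω) * ((P[f | m]) ω) := by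
  have hκ_bdd : ∀ᵐ ω ∂P, |(P[t.indicator (fun _ => (1 : ℝ)) | m]) ω| ≤ ((1 : ℝ≥0) : ℝ) := by
    refine ae_bdd_condExp_of_ae_bdd (Eventually.of_forall fun ω => ?_)
    by_cases h : ω ∈ t <;>
      simp [Set.indicator_of_mem, Set.indicator_of_notMem, h]
  refine MemLp.induction_stronglyMeasurable (μ := P) (p := 1) hm' ENNReal.one_ne_top
    (fun g => (P[fun ω => t.indicator (fun _ => (1 : ℝ)) ω * g ω | m]) =ᵐ[P]
      fun ω => ((P[t.indicator (fun _ => (1 : ℝ)) | m]) ω) * ((P[g | m]) ω))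
    ?_ ?_ ?_ ?_ (memLp_one_iff_integrable.mpr hf) hfm.aestronglyMeasurable
  · -- indicators
    intro c s hs _
    have h1 : (fun ω => t.indicator (fun _ => (1:ℝ)) ω * (s.indicator (fun _ => c)) ω)
        = c • ((s ∩ t).indicator (fun _ => (1:ℝ))) := by
      funext ω
      by_cases h1 : ω ∈ s <;> by_cases h2 : ω ∈ t <;>
        simp [Set.indicator_apply, Set.mem_inter_iff, h1, h2, smul_eq_mul]
    have h2 : (s.indicator (fun _ => c)) = c • (s.indicator (fun _ => (1:ℝ))) := by
      funext ω; by_cases h1 : ω ∈ s <;> simp [Set.indicator_apply, h1, smul_eq_mul]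
    rw [h1, h2]
    have e1 := condExp_smul (μ := P) (m := m) c ((s ∩ t).indicator (fun _ => (1:ℝ)))
    have e2 := condExp_smul (μ := P) (m := m) c (s.indicator (fun _ => (1:ℝ)))
    filter_upwards [e1, e2, hsets s hs] with ω he1 he2 hs2
    rw [he1, he2, Pi.smul_apply, Pi.smul_apply, smul_eq_mul, smul_eq_mul, hs2]
    ring
  · -- addition
    intro f g _ hfι hgι _ _ hPf hPg
    have hfi := memLp_one_iff_integrable.mp hfι
    have hgi := memLp_one_iff_integrable.mp hgι
    have h1 : (fun ω => t.indicator (fun _ => (1:ℝ)) ω * (f + g) ω)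
        = (fun ω => t.indicator (fun _ => (1:ℝ)) ω * f ω)
          + (fun ω => t.indicator (fun _ => (1:ℝ)) ω * g ω) := by
      funext ω; simp [Pi.add_apply]; ring
    rw [h1]
    have e1 := condExp_add (m := m) (aux_tind_integrable ht hfi) (aux_tind_integrable ht hgi)
    have e2 := condExp_add (m := m) hfi hgi
    filter_upwards [e1, e2, hPf, hPg] with ω he1 he2 hf2 hg2
    simp only [Pi.add_apply] at he1 he2 ⊢
    rw [he1, hf2, hg2, he2]
    ring
  · -- closedness in L¹
    refine IsSeqClosed.isClosed ?_
    intro φs φ hmem htend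
    have htendL : Tendsto (fun n => ((φs n : Lp ℝ 1 P) : Lp ℝ 1 P)) atTop
        (𝓝 ((φ : Lp ℝ 1 P))) := by
      exact (continuous_subtype_val.tendsto _).comp htend
    set g : Ω → ℝ := ⇑(φ : Lp ℝ 1 P) with hg_def
    set gn : ℕ → Ω → ℝ := fun n => ⇑(φs n : Lp ℝ 1 P) with hgn_def
    have hgi : Integrable g P := L1.integrable_coeFn _
    have hgni : ∀ n, Integrable (gn n) P := fun n => L1.integrable_coeFn _
    set δ : ℕ → ℝ≥0∞ := fun n => eLpNorm (g - gn n) 1 P with hδ_def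
    have hδ_eq : ∀ n, δ n = ENNReal.ofReal ‖(φ : Lp ℝ 1 P) - (φs n : Lp ℝ 1 P)‖ := by
      intro n
      rw [Lp.norm_def, ENNReal.ofReal_toReal (Lp.eLpNorm_ne_top _)]
      exact (eLpNorm_congr_ae (Lp.coeFn_sub (φ : Lp ℝ 1 P) ((φs n : Lp ℝ 1 P)))).symm
    have hδ0 : Tendsto δ atTop (𝓝 0) := by
      have hnorm : Tendsto (fun n => ‖(φ : Lp ℝ 1 P) - (φs n : Lp ℝ 1 P)‖) atTop (𝓝 0) := by
        have h := tendsto_iff_norm_sub_tendsto_zero.mp htendL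
        simpa [norm_sub_rev] using h
      have : δ = fun n => ENNReal.ofReal ‖(φ : Lp ℝ 1 P) - (φs n : Lp ℝ 1 P)‖ :=
        funext hδ_eq
      rw [this]
      simpa using ENNReal.tendsto_ofReal hnorm
    -- notation
    set κ : Ω → ℝ := P[t.indicator (fun _ => (1 : ℝ)) | m] with hκ_def
    set E1 : Ω → ℝ := P[fun ω => t.indicator (fun _ => (1 : ℝ)) ω * g ω | m] with hE1_def
    set E2 : Ω → ℝ := κ * P[g | m] with hE2_def
    have hbound : ∀ n, eLpNorm (E1 - E2) 1 P ≤ δ n + δ n := by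
      intro n
      have hsub1 := condExp_sub (m := m) (aux_tind_integrable ht hgi)
        (aux_tind_integrable ht (hgni n))
      have hsub2 := condExp_sub (m := m) hgi (hgni n)
      have hPn : (P[fun ω => t.indicator (fun _ => (1 : ℝ)) ω * gn n ω | m]) =ᵐ[P]
          fun ω => κ ω * ((P[gn n | m]) ω) := hmem n
      have hae : E1 - E2 =ᵐ[P]
          (P[(fun ω => t.indicator (fun _ => (1 : ℝ)) ω * g ω)
              - (fun ω => t.indicator (fun _ => (1 : ℝ)) ω * gn n ω) | m])
          + κ * (-(P[g - gn n | m])) := by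
        filter_upwards [hsub1, hsub2, hPn] with ω h1 h2 h3
        simp only [Pi.sub_apply, Pi.add_apply, Pi.mul_apply, Pi.neg_apply, hE1_def,
          hE2_def] at *
        rw [h1, h2, h3]
        ring
      have hD1m : AEStronglyMeasurable
          (P[(fun ω => t.indicator (fun _ => (1 : ℝ)) ω * g ω)
              - (fun ω => t.indicator (fun _ => (1 : ℝ)) ω * gn n ω) | m]) P :=
        (stronglyMeasurable_condExp.mono hm).aestronglyMeasurable
      have hD2m : AEStronglyMeasurable (κ * (-(P[g - gn n | m]))) P :=
        ((stronglyMeasurable_condExp.mul stronglyMeasurable_condExp.neg).mono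
          hm).aestronglyMeasurable
      calc eLpNorm (E1 - E2) 1 P
          = eLpNorm (_ + _) 1 P := eLpNorm_congr_ae hae
        _ ≤ eLpNorm (P[(fun ω => t.indicator (fun _ => (1 : ℝ)) ω * g ω)
              - (fun ω => t.indicator (fun _ => (1 : ℝ)) ω * gn n ω) | m]) 1 P
            + eLpNorm (κ * (-(P[g - gn n | m]))) 1 P :=
            eLpNorm_add_le hD1m hD2m le_rfl
        _ ≤ δ n + δ n := by
            gcongr
            · refine (eLpNorm_one_condExp_le_eLpNorm _).trans (eLpNorm_mono fun ω => ?_)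
              simp only [Pi.sub_apply, Real.norm_eq_abs]
              have h1 : |t.indicator (fun _ => (1:ℝ)) ω| ≤ 1 := by
                by_cases h : ω ∈ t <;>
                  simp [Set.indicator_of_mem, Set.indicator_of_notMem, h]
              have h2 : t.indicator (fun _ => (1:ℝ)) ω * g ω
                  - t.indicator (fun _ => (1:ℝ)) ω * gn n ω
                  = t.indicator (fun _ => (1:ℝ)) ω * (g ω - gn n ω) := by ring
              rw [h2, abs_mul]
              exact mul_le_of_le_one_left (abs_nonneg _) h1
            · refine le_trans (eLpNorm_mono_ae ?_) (eLpNorm_one_condExp_le_eLpNorm (m := m) (μ := P) (g - gn n))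
              filter_upwards [hκ_bdd] with ω hb
              simp only [Pi.mul_apply, Pi.neg_apply, Real.norm_eq_abs, abs_mul, abs_neg]
              calc |κ ω| * |(P[g - gn n | m]) ω| ≤ 1 * |(P[g - gn n | m]) ω| := by
                    apply mul_le_mul_of_nonneg_right _ (abs_nonneg _)
                    simpa using hb
                _ = |(P[g - gn n | m]) ω| := one_mul _
    have hzero : eLpNorm (E1 - E2) 1 P = 0 := by
      have h0 : Tendsto (fun n => δ n + δ n) atTop (𝓝 0) := by
        simpa using hδ0.add hδ0
      exact le_antisymm (ge_of_tendsto' h0 hbound) zero_le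
    have haesm : AEStronglyMeasurable (E1 - E2) P :=
      ((stronglyMeasurable_condExp.sub
        (stronglyMeasurable_condExp.mul stronglyMeasurable_condExp)).mono
          hm).aestronglyMeasurable
    have h00 : E1 - E2 =ᵐ[P] 0 := (eLpNorm_eq_zero_iff haesm one_ne_zero).mp hzero
    filter_upwards [h00] with ω h
    have : E1 ω - E2 ω = 0 := by simpa [Pi.sub_apply] using h
    have h' : E1 ω = E2 ω := by linarith
    simpa [hE2_def, Pi.mul_apply] using h'
  · -- a.e. congruence
    intro f1 f2 h12 _ h1
    have e1 : (fun ω => t.indicator (fun _ => (1:ℝ)) ω * f1 ω) =ᵐ[P]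
        fun ω => t.indicator (fun _ => (1:ℝ)) ω * f2 ω :=
      h12.mono fun ω h => by simp only [h]
    filter_upwards [condExp_congr_ae (m := m) e1, h1, condExp_congr_ae (m := m) h12]
      with ω a b cc
    rw [← a, b, cc]

end Aux

/-- Under Conditions A1–A3, the mean embedding of the counterfactual
outcome `Y¹` admits the doubly robust representation
`E[ξ(Y¹)] = E[(A/π(X))·(ξ(Y) − β(X)) + β(X)]`, both sides being Bochner integrals. -/
theorem dr_mean_embedding_identification
    {Ω : Type*} [MeasurableSpace Ω] (P : Measure Ω) [IsProbabilityMeasure P]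
    {𝒳 : Type*} [MeasurableSpace 𝒳]
    {d : ℕ}
    {H : Type*} [NormedAddCommGroup H] [InnerProductSpace ℝ H] [CompleteSpace H]
    [TopologicalSpace.SeparableSpace H]
    -- random elements
    (X : Ω → 𝒳) (A : Ω → ℝ) (Y0 Y1 Y : Ω → (Fin d → ℝ))
    (hX : Measurable X) (hA : Measurable A) (hY0 : Measurable Y0) (hY1 : Measurable Y1)
    (hA01 : ∀ ω, A ω = 0 ∨ A ω = 1)
    -- Condition A1: the observed outcome
    (hA1 : ∀ ω, Y ω = A ω • Y1 ω + (1 - A ω) • Y0 ω)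
    -- Condition A2: σ(Y⁰,Y¹) ⟂ σ(A) conditionally on σ(X)
    (hA2 : ∀ s t : Set Ω,
      MeasurableSet[MeasurableSpace.comap (fun ω => (Y0 ω, Y1 ω)) inferInstance] s →
      MeasurableSet[MeasurableSpace.comap A inferInstance] t →
      (P[(s ∩ t).indicator (fun _ => (1 : ℝ)) | MeasurableSpace.comap X inferInstance])
        =ᵐ[P] fun ω =>
          ((P[s.indicator (fun _ => (1 : ℝ)) | MeasurableSpace.comap X inferInstance]) ω) *
          ((P[t.indicator (fun _ => (1 : ℝ)) | MeasurableSpace.comap X inferInstance]) ω))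
    -- the propensity score π(X) := E[A | X]
    (π : 𝒳 → ℝ) (hπmeas : Measurable π)
    (hπ : (fun ω => π (X ω)) =ᵐ[P] P[A | MeasurableSpace.comap X inferInstance])
    -- Condition A3: ε < π(X) < 1 − ε almost surely
    (ε : ℝ) (hε : 0 < ε)
    (hA3 : ∀ᵐ ω ∂P, ε < π (X ω) ∧ π (X ω) < 1 - ε)
    -- Bochner-measurable feature map with E‖ξ(Y¹)‖ < ∞
    (ξ : (Fin d → ℝ) → H) (hξ : StronglyMeasurable ξ)
    (hξint : Integrable (fun ω => ξ (Y1 ω)) P)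
    -- σ(X)-measurable, Bochner-integrable β with π(X)·β(X) = E[A·ξ(Y) | X] a.s.
    (β : 𝒳 → H) (hβmeas : StronglyMeasurable β)
    (hβint : Integrable (fun ω => β (X ω)) P)
    (hβ : (fun ω => π (X ω) • β (X ω))
        =ᵐ[P] P[fun ω => A ω • ξ (Y ω) | MeasurableSpace.comap X inferInstance]) :
    ∫ ω, ξ (Y1 ω) ∂P
      = ∫ ω, ((A ω / π (X ω)) • (ξ (Y ω) - β (X ω)) + β (X ω)) ∂P := by
  classical
  have hm : MeasurableSpace.comap X inferInstance ≤ _ := hX.comap_le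
  have hm' : MeasurableSpace.comap (fun ω => (Y0 ω, Y1 ω)) inferInstance ≤ _ :=
    (hY0.prodMk hY1).comap_le
  haveI : SigmaFinite (P.trim hm) := by
    haveI := isFiniteMeasure_trim (μ := P) hm
    infer_instance
  -- measurability with respect to the sub-σ-algebras
  have hXm : Measurable[MeasurableSpace.comap X inferInstance] X := fun s hs => ⟨s, hs, rfl⟩
  have hpair : Measurable[MeasurableSpace.comap (fun ω => (Y0 ω, Y1 ω)) inferInstance]
      (fun ω => (Y0 ω, Y1 ω)) := fun s hs => ⟨s, hs, rfl⟩
  have hY1m' : Measurable[MeasurableSpace.comap (fun ω => (Y0 ω, Y1 ω)) inferInstance] Y1 :=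
    measurable_snd.comp hpair
  -- basic pointwise facts
  have ht0c : MeasurableSet[MeasurableSpace.comap A inferInstance] (A ⁻¹' {1}) :=
    ⟨{1}, measurableSet_singleton 1, rfl⟩
  have ht0 : MeasurableSet (A ⁻¹' {1}) := hA (measurableSet_singleton 1)
  have hindA : (A ⁻¹' {1}).indicator (fun _ => (1:ℝ)) = A := by
    funext ω
    rcases hA01 ω with h | h <;>
      simp [Set.indicator_apply, Set.mem_preimage, Set.mem_singleton_iff, h]
  have hYeq : ∀ ω, A ω = 1 → Y ω = Y1 ω := by
    intro ω h; rw [hA1 ω, h]; simp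
  have hYY1 : ∀ ω, A ω • ξ (Y ω) = A ω • ξ (Y1 ω) := by
    intro ω
    rcases hA01 ω with h | h
    · simp [h]
    · rw [hYeq ω h]
  have hAbd : ∀ ω, ‖A ω‖ ≤ 1 := by
    intro ω; rcases hA01 ω with h | h <;> simp [h]
  -- integrability facts
  have hξY1sm : AEStronglyMeasurable (fun ω => ξ (Y1 ω)) P :=
    (hξ.comp_measurable hY1).aestronglyMeasurable
  have hβXsm : AEStronglyMeasurable (fun ω => β (X ω)) P :=
    (hβmeas.comp_measurable hX).aestronglyMeasurable
  have hwm : AEStronglyMeasurable (fun ω => A ω / π (X ω)) P :=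
    (hA.div (hπmeas.comp hX)).aestronglyMeasurable
  have hwbdd : ∀ᵐ ω ∂P, ‖A ω / π (X ω)‖ ≤ ε⁻¹ := by
    filter_upwards [hA3] with ω h
    have hp : 0 < π (X ω) := hε.trans h.1
    rw [Real.norm_eq_abs, abs_div, abs_of_pos hp]
    have h1 : |A ω| ≤ 1 := by rcases hA01 ω with h0 | h0 <;> simp [h0]
    calc |A ω| / π (X ω) ≤ 1 / π (X ω) := by gcongr
      _ ≤ 1 / ε := one_div_le_one_div_of_le hε h.1.le
      _ = ε⁻¹ := one_div ε
  have hinvπbdd : ∀ᵐ ω ∂P, ‖(π (X ω))⁻¹‖ ≤ ε⁻¹ := by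
    filter_upwards [hA3] with ω h
    have hp : 0 < π (X ω) := hε.trans h.1
    rw [Real.norm_eq_abs, abs_of_pos (inv_pos.mpr hp)]
    exact inv_anti₀ hε h.1.le
  have hg1 : Integrable (fun ω => (A ω / π (X ω)) • ξ (Y1 ω)) P := by
    refine Integrable.mono' (hξint.norm.const_mul ε⁻¹) (hwm.smul hξY1sm) ?_
    filter_upwards [hwbdd] with ω h
    rw [norm_smul]
    exact mul_le_mul_of_nonneg_right h (norm_nonneg _)
  have hg2 : Integrable (fun ω => (A ω / π (X ω)) • β (X ω)) P := by
    refine Integrable.mono' (hβint.norm.const_mul ε⁻¹) (hwm.smul hβXsm) ?_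
    filter_upwards [hwbdd] with ω h
    rw [norm_smul]
    exact mul_le_mul_of_nonneg_right h (norm_nonneg _)
  -- split the right-hand side
  have hRHSfun : ∀ ω, (A ω / π (X ω)) • (ξ (Y ω) - β (X ω)) + β (X ω)
      = ((A ω / π (X ω)) • ξ (Y1 ω) - (A ω / π (X ω)) • β (X ω)) + β (X ω) := by
    intro ω
    rcases hA01 ω with h | h
    · simp [h]
    · rw [hYeq ω h, smul_sub]
  have hsplit : ∫ ω, ((A ω / π (X ω)) • (ξ (Y ω) - β (X ω)) + β (X ω)) ∂P
      = (∫ ω, (A ω / π (X ω)) • ξ (Y1 ω) ∂P - ∫ ω, (A ω / π (X ω)) • β (X ω) ∂P)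
        + ∫ ω, β (X ω) ∂P := by
    calc ∫ ω, ((A ω / π (X ω)) • (ξ (Y ω) - β (X ω)) + β (X ω)) ∂P
        = ∫ ω, (((A ω / π (X ω)) • ξ (Y1 ω) - (A ω / π (X ω)) • β (X ω)) + β (X ω)) ∂P :=
          integral_congr_ae (Eventually.of_forall hRHSfun)
      _ = _ := by
          have hg12 : Integrable (fun ω => (A ω / π (X ω)) • ξ (Y1 ω)
              - (A ω / π (X ω)) • β (X ω)) P := hg1.sub hg2
          rw [integral_add hg12 hβint, integral_sub hg1 hg2]
  rw [hsplit]
  refine ext_inner_left ℝ fun c => ?_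
  rw [inner_add_right, inner_sub_right, ← integral_inner hξint c, ← integral_inner hg1 c,
    ← integral_inner hg2 c, ← integral_inner hβint c]
  -- scalar-valued versions
  have hfm' : StronglyMeasurable[MeasurableSpace.comap (fun ω => (Y0 ω, Y1 ω)) inferInstance]
      (fun ω => ⟪c, ξ (Y1 ω)⟫) :=
    (innerSL ℝ c).continuous.comp_stronglyMeasurable (hξ.comp_measurable hY1m')
  have hfint : Integrable (fun ω => ⟪c, ξ (Y1 ω)⟫) P := hξint.const_inner c
  have hbint : Integrable (fun ω => ⟪c, β (X ω)⟫) P := hβint.const_inner c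
  -- Step A : conditional independence pull-out
  have hkey := aux_condexp_pullout hm hm' ht0 (fun s hs => hA2 s _ hs ht0c) hfm' hfint
  rw [hindA] at hkey
  -- Step B : the regression identity, scalarized
  have hAξYint : Integrable (fun ω => A ω • ξ (Y ω)) P := by
    have h1 : Integrable (fun ω => A ω • ξ (Y1 ω)) P := by
      refine Integrable.mono' hξint.norm (hA.aestronglyMeasurable.smul hξY1sm)
        (Eventually.of_forall fun ω => ?_)
      rw [norm_smul]
      exact mul_le_of_le_one_left (norm_nonneg _) (hAbd ω)
    exact h1.congr (Eventually.of_forall fun ω => (hYY1 ω).symm)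
  have hic := aux_condexp_const_inner hm hAξYint c
  have hinner_fun : (fun ω => ⟪c, A ω • ξ (Y ω)⟫) = fun ω => A ω * ⟪c, ξ (Y1 ω)⟫ := by
    funext ω; rw [hYY1 ω, real_inner_smul_right]
  rw [hinner_fun] at hic
  have hB : (fun ω => π (X ω) * ⟪c, β (X ω)⟫) =ᵐ[P]
      P[fun ω => A ω * ⟪c, ξ (Y1 ω)⟫ | MeasurableSpace.comap X inferInstance] := by
    filter_upwards [hβ, hic] with ω h1 h2
    rw [← h2, ← h1, real_inner_smul_right]
  -- combine:  E[f | X] = ⟪c, β(X)⟫  a.e.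
  have hPfb : (P[fun ω => ⟪c, ξ (Y1 ω)⟫ | MeasurableSpace.comap X inferInstance]) =ᵐ[P]
      fun ω => ⟪c, β (X ω)⟫ := by
    filter_upwards [hkey, hB, hπ.symm, hA3] with ω h1 h2 h3 h4
    have hne : π (X ω) ≠ 0 := (hε.trans h4.1).ne'
    have h5 := h2.trans h1
    rw [h3] at h5
    exact (mul_left_cancel₀ hne h5).symm
  have hLHS : ∫ ω, ⟪c, ξ (Y1 ω)⟫ ∂P = ∫ ω, ⟪c, β (X ω)⟫ ∂P := by
    rw [← integral_condExp hm (f := fun ω => ⟪c, ξ (Y1 ω)⟫)]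
    exact integral_congr_ae hPfb
  -- pull-out computations for the two weighted terms
  have hAfint : Integrable (fun ω => A ω * ⟪c, ξ (Y1 ω)⟫) P :=
    Integrable.bdd_mul hfint hA.aestronglyMeasurable (c := 1) (Eventually.of_forall hAbd)
  have hinvπsm : StronglyMeasurable[MeasurableSpace.comap X inferInstance]
      (fun ω => (π (X ω))⁻¹) := ((hπmeas.comp hXm).inv).stronglyMeasurable
  have hprod1int : Integrable (fun ω => (π (X ω))⁻¹ * (A ω * ⟪c, ξ (Y1 ω)⟫)) P :=
    Integrable.bdd_mul hAfint ((hπmeas.comp hX).inv.aestronglyMeasurable) hinvπbdd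
  have hpull1 := condExp_mul_of_stronglyMeasurable_left (μ := P) hinvπsm hprod1int hAfint
  have hI1 : ∫ ω, ⟪c, (A ω / π (X ω)) • ξ (Y1 ω)⟫ ∂P = ∫ ω, ⟪c, β (X ω)⟫ ∂P := by
    have he : (fun ω => ⟪c, (A ω / π (X ω)) • ξ (Y1 ω)⟫)
        = (fun ω => (π (X ω))⁻¹) * (fun ω => A ω * ⟪c, ξ (Y1 ω)⟫) := by
      funext ω
      simp only [Pi.mul_apply, real_inner_smul_right]
      ring
    rw [he, ← integral_condExp hm]
    refine integral_congr_ae ?_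
    filter_upwards [hpull1, hB, hA3] with ω h1 h2 h3
    have hne : π (X ω) ≠ 0 := (hε.trans h3.1).ne'
    rw [h1, Pi.mul_apply, ← h2, ← mul_assoc, inv_mul_cancel₀ hne, one_mul]
  have hbsm : StronglyMeasurable[MeasurableSpace.comap X inferInstance]
      (fun ω => ⟪c, β (X ω)⟫ * (π (X ω))⁻¹) :=
    ((innerSL ℝ c).continuous.comp_stronglyMeasurable (hβmeas.comp_measurable hXm)).mul hinvπsm
  have hAint : Integrable A P := by
    refine Integrable.mono' (integrable_const (1:ℝ)) hA.aestronglyMeasurable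
      (Eventually.of_forall fun ω => ?_)
    exact hAbd ω
  have hFint : Integrable (fun ω => ⟪c, β (X ω)⟫ * (π (X ω))⁻¹) P := by
    have h1 : Integrable (fun ω => (π (X ω))⁻¹ * ⟪c, β (X ω)⟫) P :=
      Integrable.bdd_mul hbint ((hπmeas.comp hX).inv.aestronglyMeasurable) hinvπbdd
    exact h1.congr (Eventually.of_forall fun ω => mul_comm _ _)
  have hprod2int : Integrable (fun ω => (⟪c, β (X ω)⟫ * (π (X ω))⁻¹) * A ω) P := by
    have h1 := Integrable.bdd_mul hFint hA.aestronglyMeasurable (c := 1) (Eventually.of_forall hAbd)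
    exact h1.congr (Eventually.of_forall fun ω => mul_comm _ _)
  have hpull2 := condExp_mul_of_stronglyMeasurable_left (μ := P) hbsm hprod2int hAint
  have hI2 : ∫ ω, ⟪c, (A ω / π (X ω)) • β (X ω)⟫ ∂P = ∫ ω, ⟪c, β (X ω)⟫ ∂P := by
    have he : (fun ω => ⟪c, (A ω / π (X ω)) • β (X ω)⟫)
        = (fun ω => ⟪c, β (X ω)⟫ * (π (X ω))⁻¹) * A := by
      funext ω
      simp only [Pi.mul_apply, real_inner_smul_right]
      ring
    rw [he, ← integral_condExp hm]
    refine integral_congr_ae ?_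
    filter_upwards [hpull2, hπ, hA3] with ω h1 h2 h3
    have hne : π (X ω) ≠ 0 := (hε.trans h3.1).ne'
    rw [h1, Pi.mul_apply, ← h2, mul_assoc, inv_mul_cancel₀ hne, mul_one]
  rw [hLHS, hI1, hI2]
  ring
end

section
/- Let φ(Z) := (A/π(X))·(ξ(Y) − β(X)) + β(X) be the doubly robust embedding with the true nuisances, and let φ̂(Z) := (A/π̂(X))·(ξ(Y) − β̂(X)) + β̂(X) be its analogue with fixed measurable nuisance estimates π̂: 𝒳 → [ε, 1−ε] and Bochner-integrable β̂: 𝒳 → H. Then almost surely E[φ̂(Z) − φ(Z) | X] = ((π(X) − π̂(X))/π̂(X)) · (β(X) − β̂(X)). -/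
open MeasureTheory Filter Set
open scoped RealInnerProductSpace

section Aux

variable {α : Type*} {m m0 : MeasurableSpace α} {μ : Measure α}
variable {H : Type*} [NormedAddCommGroup H] [InnerProductSpace ℝ H]

/-- A bounded (a.e.) scalar times an integrable vector-valued function is integrable. -/
lemma aux_integrable_bdd_smul {f : α → ℝ} {g : α → H}
    (hf : AEStronglyMeasurable f μ) (hg : Integrable g μ) {c : ℝ}
    (h : ∀ᵐ ω ∂μ, |f ω| ≤ c) : Integrable (fun ω => f ω • g ω) μ := by
  refine Integrable.mono' (hg.norm.const_mul c) (hf.smul hg.1) ?_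
  filter_upwards [h] with ω hω
  rw [norm_smul, Real.norm_eq_abs]
  exact mul_le_mul_of_nonneg_right hω (norm_nonneg _)

lemma aux_integrable_bdd_mul {f g : α → ℝ}
    (hf : AEStronglyMeasurable f μ) (hg : Integrable g μ) {c : ℝ}
    (h : ∀ᵐ ω ∂μ, |f ω| ≤ c) : Integrable (fun ω => f ω * g ω) μ := by
  simpa only [smul_eq_mul] using aux_integrable_bdd_smul hf hg h

lemma aux_integrable_mul_bdd {f g : α → ℝ}
    (hf : AEStronglyMeasurable f μ) (hg : Integrable g μ) {c : ℝ}
    (h : ∀ᵐ ω ∂μ, |f ω| ≤ c) : Integrable (fun ω => g ω * f ω) μ :=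
  (aux_integrable_bdd_mul hf hg h).congr (Filter.Eventually.of_forall fun ω => mul_comm _ _)

/-- Conditional expectation commutes with the inner product against a fixed vector. -/
lemma aux_inner_condexp [CompleteSpace H] (hm : m ≤ m0) [IsFiniteMeasure μ] {F : α → H}
    (hF : Integrable F μ) (e : H) :
    (μ[fun x => ⟪e, F x⟫|m]) =ᵐ[μ] fun x => ⟪e, (μ[F|m]) x⟫ := by
  haveI : SigmaFinite (μ.trim hm) := by
    haveI := isFiniteMeasure_trim (μ := μ) hm
    infer_instance
  refine (ae_eq_condExp_of_forall_setIntegral_eq hm (hF.const_inner e) ?_ ?_ ?_).symm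
  · exact fun s _ _ => (integrable_condExp.const_inner e).integrableOn
  · intro s hs _
    rw [integral_inner integrable_condExp.integrableOn e,
      setIntegral_condExp hm hF hs, integral_inner hF.integrableOn e]
  · exact StronglyMeasurable.aestronglyMeasurable (stronglyMeasurable_const.inner stronglyMeasurable_condExp)

/-- Two H-valued functions are a.e. equal as soon as their inner products against a dense
sequence of vectors are a.e. equal. -/
lemma aux_ae_eq_of_forall_inner {f g : α → H} {m0 : MeasurableSpace α} {μ : Measure α}
    (u : ℕ → H) (hu : DenseRange u)
    (h : ∀ n : ℕ, (fun x => ⟪u n, f x⟫) =ᵐ[μ] fun x => ⟪u n, g x⟫) :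
    f =ᵐ[μ] g := by
  have h' : ∀ᵐ x ∂μ, ∀ n, ⟪u n, f x⟫ = ⟪u n, g x⟫ := ae_all_iff.2 fun n => h n
  filter_upwards [h'] with x hx
  have hall : ∀ v : H, ⟪v, f x⟫ = ⟪v, g x⟫ := by
    have hc1 : Continuous fun v : H => ⟪v, f x⟫ := continuous_id.inner continuous_const
    have hc2 : Continuous fun v : H => ⟪v, g x⟫ := continuous_id.inner continuous_const
    have heq : (fun v : H => ⟪v, f x⟫) = fun v : H => ⟪v, g x⟫ := by
      refine Continuous.ext_on hu hc1 hc2 ?_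
      rintro _ ⟨n, rfl⟩
      exact hx n
    exact fun v => congrFun heq v
  have h0 : ⟪f x - g x, f x - g x⟫ = (0 : ℝ) := by
    rw [inner_sub_right, hall (f x - g x), sub_self]
  exact sub_eq_zero.mp (inner_self_eq_zero.mp h0)

end Aux

/-- Conditional bias of the doubly robust embedding: with true nuisances
`φ(Z) = (A/π(X))·(ξ(Y) − β(X)) + β(X)` and estimated nuisances
`φ̂(Z) = (A/π̂(X))·(ξ(Y) − β̂(X)) + β̂(X)`, one has almost surely
`E[φ̂(Z) − φ(Z) | X] = ((π(X) − π̂(X))/π̂(X)) • (β(X) − β̂(X))`. -/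
theorem dr_embedding_conditional_bias
    {Ω : Type*} [MeasurableSpace Ω] (P : Measure Ω) [IsProbabilityMeasure P]
    {𝒳 : Type*} [MeasurableSpace 𝒳]
    {d : ℕ}
    {H : Type*} [NormedAddCommGroup H] [InnerProductSpace ℝ H] [CompleteSpace H]
    [TopologicalSpace.SeparableSpace H]
    -- random elements
    (X : Ω → 𝒳) (A : Ω → ℝ) (Y0 Y1 Y : Ω → (Fin d → ℝ))
    (hX : Measurable X) (hA : Measurable A) (hY0 : Measurable Y0) (hY1 : Measurable Y1)
    (hA01 : ∀ ω, A ω = 0 ∨ A ω = 1)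
    -- Condition A1: the observed outcome
    (hA1 : ∀ ω, Y ω = A ω • Y1 ω + (1 - A ω) • Y0 ω)
    -- Condition A2: σ(Y⁰,Y¹) ⟂ σ(A) conditionally on σ(X)
    (hA2 : ∀ s t : Set Ω,
      MeasurableSet[MeasurableSpace.comap (fun ω => (Y0 ω, Y1 ω)) inferInstance] s →
      MeasurableSet[MeasurableSpace.comap A inferInstance] t →
      (P[(s ∩ t).indicator (fun _ => (1 : ℝ)) | MeasurableSpace.comap X inferInstance])
        =ᵐ[P] fun ω =>
          ((P[s.indicator (fun _ => (1 : ℝ)) | MeasurableSpace.comap X inferInstance]) ω) *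
          ((P[t.indicator (fun _ => (1 : ℝ)) | MeasurableSpace.comap X inferInstance]) ω))
    -- the propensity score π(X) := E[A | X]
    (π : 𝒳 → ℝ) (hπmeas : Measurable π)
    (hπ : (fun ω => π (X ω)) =ᵐ[P] P[A | MeasurableSpace.comap X inferInstance])
    -- Condition A3: ε < π(X) < 1 − ε almost surely
    (ε : ℝ) (hε : 0 < ε)
    (hA3 : ∀ᵐ ω ∂P, ε < π (X ω) ∧ π (X ω) < 1 - ε)
    -- Bochner-measurable feature map with E‖ξ(Y)‖ < ∞
    (ξ : (Fin d → ℝ) → H) (hξ : StronglyMeasurable ξ)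
    (hξint : Integrable (fun ω => ξ (Y ω)) P)
    -- σ(X)-measurable, Bochner-integrable β with π(X)·β(X) = E[A·ξ(Y) | X] a.s.
    (β : 𝒳 → H) (hβmeas : StronglyMeasurable β)
    (hβint : Integrable (fun ω => β (X ω)) P)
    (hβ : (fun ω => π (X ω) • β (X ω))
        =ᵐ[P] P[fun ω => A ω • ξ (Y ω) | MeasurableSpace.comap X inferInstance])
    -- fixed measurable nuisance estimates π̂ : 𝒳 → [ε, 1−ε] and Bochner-integrable β̂
    (πhat : 𝒳 → ℝ) (hπhatmeas : Measurable πhat)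
    (hπhatrange : ∀ x, πhat x ∈ Set.Icc ε (1 - ε))
    (βhat : 𝒳 → H) (hβhatmeas : StronglyMeasurable βhat)
    (hβhatint : Integrable (fun ω => βhat (X ω)) P) :
    (P[fun ω =>
        ((A ω / πhat (X ω)) • (ξ (Y ω) - βhat (X ω)) + βhat (X ω))
        - ((A ω / π (X ω)) • (ξ (Y ω) - β (X ω)) + β (X ω))
      | MeasurableSpace.comap X inferInstance])
      =ᵐ[P] fun ω =>
        ((π (X ω) - πhat (X ω)) / πhat (X ω)) • (β (X ω) - βhat (X ω)) := by
  have hm := hX.comap_le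
  set m : MeasurableSpace Ω := MeasurableSpace.comap X inferInstance with hmdef
  haveI : SigmaFinite (P.trim hm) := by
    haveI := isFiniteMeasure_trim (μ := P) hm
    infer_instance
  -- basic bounds
  have habs : ∀ ω, |A ω| ≤ 1 := fun ω => by rcases hA01 ω with h | h <;> simp [h]
  have hπhatpos : ∀ x, 0 < πhat x := fun x => lt_of_lt_of_le hε (hπhatrange x).1
  have hπhatinv : ∀ ω, |(πhat (X ω))⁻¹| ≤ ε⁻¹ := fun ω => by
    rw [abs_of_pos (inv_pos.2 (hπhatpos _))]
    exact inv_anti₀ hε (hπhatrange _).1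
  have hπinv : ∀ᵐ ω ∂P, |(π (X ω))⁻¹| ≤ ε⁻¹ := by
    filter_upwards [hA3] with ω h
    rw [abs_of_pos (inv_pos.2 (lt_trans hε h.1))]
    exact inv_anti₀ hε h.1.le
  -- integrability of the integrand
  have hFint : Integrable (fun ω => A ω • ξ (Y ω)) P :=
    aux_integrable_bdd_smul hA.aestronglyMeasurable hξint (Eventually.of_forall habs)
  have hTa : Integrable (fun ω => (A ω / πhat (X ω)) • (ξ (Y ω) - βhat (X ω))) P := by
    refine aux_integrable_bdd_smul ((hA.div (hπhatmeas.comp hX)).aestronglyMeasurable)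
      (hξint.sub hβhatint) (c := ε⁻¹) (Eventually.of_forall fun ω => ?_)
    rw [abs_div, abs_of_pos (hπhatpos _), ← one_div]
    exact div_le_div₀ zero_le_one (habs ω) hε (hπhatrange _).1
  have hTb : Integrable (fun ω => (A ω / π (X ω)) • (ξ (Y ω) - β (X ω))) P := by
    refine aux_integrable_bdd_smul ((hA.div (hπmeas.comp hX)).aestronglyMeasurable)
      (hξint.sub hβint) (c := ε⁻¹) ?_
    filter_upwards [hA3] with ω h
    rw [abs_div, abs_of_pos (lt_trans hε h.1), ← one_div]
    exact div_le_div₀ zero_le_one (habs ω) hε h.1.le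
  have hD : Integrable (fun ω =>
      ((A ω / πhat (X ω)) • (ξ (Y ω) - βhat (X ω)) + βhat (X ω))
      - ((A ω / π (X ω)) • (ξ (Y ω) - β (X ω)) + β (X ω))) P :=
    (hTa.add hβhatint).sub (hTb.add hβint)
  -- reduce to real-valued identities via inner products with a dense sequence
  haveI : Nonempty H := ⟨0⟩
  refine aux_ae_eq_of_forall_inner (TopologicalSpace.denseSeq H)
    (TopologicalSpace.denseRange_denseSeq H) fun n => ?_
  set e : H := TopologicalSpace.denseSeq H n with hedef
  refine ((aux_inner_condexp hm hD e).symm).trans ?_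
  -- real-valued integrands
  have hξe : Integrable (fun ω => ⟪e, ξ (Y ω)⟫) P := hξint.const_inner e
  have hβe : Integrable (fun ω => ⟪e, β (X ω)⟫) P := hβint.const_inner e
  have hβhate : Integrable (fun ω => ⟪e, βhat (X ω)⟫) P := hβhatint.const_inner e
  have hAξe : Integrable (fun ω => A ω * ⟪e, ξ (Y ω)⟫) P :=
    aux_integrable_bdd_mul hA.aestronglyMeasurable hξe (Eventually.of_forall habs)
  have hAint : Integrable A P :=
    Integrable.mono' (integrable_const 1) hA.aestronglyMeasurable
      (Eventually.of_forall fun ω => by simpa using habs ω)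
  have hg1 : Integrable (fun ω => (πhat (X ω))⁻¹ * (A ω * ⟪e, ξ (Y ω)⟫)) P :=
    aux_integrable_bdd_mul ((hπhatmeas.comp hX).inv).aestronglyMeasurable hAξe
      (Eventually.of_forall hπhatinv)
  have hinner2 : Integrable (fun ω => (πhat (X ω))⁻¹ * ⟪e, βhat (X ω)⟫) P :=
    aux_integrable_bdd_mul ((hπhatmeas.comp hX).inv).aestronglyMeasurable hβhate
      (Eventually.of_forall hπhatinv)
  have hg2 : Integrable (fun ω => ((πhat (X ω))⁻¹ * ⟪e, βhat (X ω)⟫) * A ω) P :=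
    aux_integrable_mul_bdd hA.aestronglyMeasurable hinner2 (Eventually.of_forall habs)
  have hg4 : Integrable (fun ω => (π (X ω))⁻¹ * (A ω * ⟪e, ξ (Y ω)⟫)) P :=
    aux_integrable_bdd_mul ((hπmeas.comp hX).inv).aestronglyMeasurable hAξe hπinv
  have hinner5 : Integrable (fun ω => (π (X ω))⁻¹ * ⟪e, β (X ω)⟫) P :=
    aux_integrable_bdd_mul ((hπmeas.comp hX).inv).aestronglyMeasurable hβe hπinv
  have hg5 : Integrable (fun ω => ((π (X ω))⁻¹ * ⟪e, β (X ω)⟫) * A ω) P :=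
    aux_integrable_mul_bdd hA.aestronglyMeasurable hinner5 (Eventually.of_forall habs)
  -- strong measurability w.r.t. `m` of the σ(X)-measurable factors
  have hXm : Measurable[m] X := comap_measurable X
  have hβhate𝒳 : Measurable fun x => ⟪e, βhat x⟫ :=
    (stronglyMeasurable_const.inner hβhatmeas).measurable
  have hβe𝒳 : Measurable fun x => ⟪e, β x⟫ :=
    (stronglyMeasurable_const.inner hβmeas).measurable
  have hsm1 : StronglyMeasurable[m] (fun ω => (πhat (X ω))⁻¹) :=
    ((hπhatmeas.inv).comp hXm).stronglyMeasurable
  have hsm2 : StronglyMeasurable[m] (fun ω => (πhat (X ω))⁻¹ * ⟪e, βhat (X ω)⟫) :=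
    (((hπhatmeas.inv).mul hβhate𝒳).comp hXm).stronglyMeasurable
  have hsm3 : StronglyMeasurable[m] (fun ω => ⟪e, βhat (X ω)⟫) :=
    (hβhate𝒳.comp hXm).stronglyMeasurable
  have hsm4 : StronglyMeasurable[m] (fun ω => (π (X ω))⁻¹) :=
    ((hπmeas.inv).comp hXm).stronglyMeasurable
  have hsm5 : StronglyMeasurable[m] (fun ω => (π (X ω))⁻¹ * ⟪e, β (X ω)⟫) :=
    (((hπmeas.inv).mul hβe𝒳).comp hXm).stronglyMeasurable
  have hsm6 : StronglyMeasurable[m] (fun ω => ⟪e, β (X ω)⟫) :=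
    (hβe𝒳.comp hXm).stronglyMeasurable
  -- key conditional expectation computations
  have hkey : P[fun ω => A ω * ⟪e, ξ (Y ω)⟫|m] =ᵐ[P] fun ω => π (X ω) * ⟪e, β (X ω)⟫ := by
    have h2 : (fun ω => A ω * ⟪e, ξ (Y ω)⟫) = fun ω => ⟪e, A ω • ξ (Y ω)⟫ := by
      funext ω; rw [real_inner_smul_right]
    rw [h2]
    refine (aux_inner_condexp hm hFint e).trans ?_
    filter_upwards [hβ] with ω hω
    rw [← hω, real_inner_smul_right]
  have hG1 : P[fun ω => (πhat (X ω))⁻¹ * (A ω * ⟪e, ξ (Y ω)⟫)|m]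
      =ᵐ[P] (fun ω => (πhat (X ω))⁻¹) * P[fun ω => A ω * ⟪e, ξ (Y ω)⟫|m] :=
    condExp_mul_of_stronglyMeasurable_left hsm1 hg1 hAξe
  have hG1' : P[fun ω => (πhat (X ω))⁻¹ * (A ω * ⟪e, ξ (Y ω)⟫)|m]
      =ᵐ[P] fun ω => (πhat (X ω))⁻¹ * (π (X ω) * ⟪e, β (X ω)⟫) := by
    refine hG1.trans ?_
    filter_upwards [hkey] with ω hω
    simp only [Pi.mul_apply, hω]
  have hG2 : P[fun ω => ((πhat (X ω))⁻¹ * ⟪e, βhat (X ω)⟫) * A ω|m]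
      =ᵐ[P] (fun ω => (πhat (X ω))⁻¹ * ⟪e, βhat (X ω)⟫) * P[A|m] :=
    condExp_mul_of_stronglyMeasurable_left hsm2 hg2 hAint
  have hG2' : P[fun ω => ((πhat (X ω))⁻¹ * ⟪e, βhat (X ω)⟫) * A ω|m]
      =ᵐ[P] fun ω => ((πhat (X ω))⁻¹ * ⟪e, βhat (X ω)⟫) * π (X ω) := by
    refine hG2.trans ?_
    filter_upwards [hπ.symm] with ω hω
    simp only [Pi.mul_apply, hω]
  have hG3' : P[fun ω => ⟪e, βhat (X ω)⟫|m] = fun ω => ⟪e, βhat (X ω)⟫ :=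
    condExp_of_stronglyMeasurable hm hsm3 hβhate
  have hG4 : P[fun ω => (π (X ω))⁻¹ * (A ω * ⟪e, ξ (Y ω)⟫)|m]
      =ᵐ[P] (fun ω => (π (X ω))⁻¹) * P[fun ω => A ω * ⟪e, ξ (Y ω)⟫|m] :=
    condExp_mul_of_stronglyMeasurable_left hsm4 hg4 hAξe
  have hG4' : P[fun ω => (π (X ω))⁻¹ * (A ω * ⟪e, ξ (Y ω)⟫)|m]
      =ᵐ[P] fun ω => (π (X ω))⁻¹ * (π (X ω) * ⟪e, β (X ω)⟫) := by
    refine hG4.trans ?_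
    filter_upwards [hkey] with ω hω
    simp only [Pi.mul_apply, hω]
  have hG5 : P[fun ω => ((π (X ω))⁻¹ * ⟪e, β (X ω)⟫) * A ω|m]
      =ᵐ[P] (fun ω => (π (X ω))⁻¹ * ⟪e, β (X ω)⟫) * P[A|m] :=
    condExp_mul_of_stronglyMeasurable_left hsm5 hg5 hAint
  have hG5' : P[fun ω => ((π (X ω))⁻¹ * ⟪e, β (X ω)⟫) * A ω|m]
      =ᵐ[P] fun ω => ((π (X ω))⁻¹ * ⟪e, β (X ω)⟫) * π (X ω) := by
    refine hG5.trans ?_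
    filter_upwards [hπ.symm] with ω hω
    simp only [Pi.mul_apply, hω]
  have hG6' : P[fun ω => ⟪e, β (X ω)⟫|m] = fun ω => ⟪e, β (X ω)⟫ :=
    condExp_of_stronglyMeasurable hm hsm6 hβe
  -- expand the inner product of the integrand
  have hrw : (fun ω => ⟪e,
        ((A ω / πhat (X ω)) • (ξ (Y ω) - βhat (X ω)) + βhat (X ω))
        - ((A ω / π (X ω)) • (ξ (Y ω) - β (X ω)) + β (X ω))⟫)
      = fun ω =>
        ((πhat (X ω))⁻¹ * (A ω * ⟪e, ξ (Y ω)⟫)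
          - ((πhat (X ω))⁻¹ * ⟪e, βhat (X ω)⟫) * A ω
          + ⟪e, βhat (X ω)⟫)
        - ((π (X ω))⁻¹ * (A ω * ⟪e, ξ (Y ω)⟫)
          - ((π (X ω))⁻¹ * ⟪e, β (X ω)⟫) * A ω
          + ⟪e, β (X ω)⟫) := by
    funext ω
    simp only [inner_sub_right, inner_add_right, real_inner_smul_right, div_eq_mul_inv]
    ring
  rw [hrw]
  -- split the conditional expectation
  have hL : P[(fun ω =>
        ((πhat (X ω))⁻¹ * (A ω * ⟪e, ξ (Y ω)⟫)
          - ((πhat (X ω))⁻¹ * ⟪e, βhat (X ω)⟫) * A ω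
          + ⟪e, βhat (X ω)⟫)
        - ((π (X ω))⁻¹ * (A ω * ⟪e, ξ (Y ω)⟫)
          - ((π (X ω))⁻¹ * ⟪e, β (X ω)⟫) * A ω
          + ⟪e, β (X ω)⟫))|m]
      =ᵐ[P]
      ((P[fun ω => (πhat (X ω))⁻¹ * (A ω * ⟪e, ξ (Y ω)⟫)|m]
        - P[fun ω => ((πhat (X ω))⁻¹ * ⟪e, βhat (X ω)⟫) * A ω|m]
        + P[fun ω => ⟪e, βhat (X ω)⟫|m])
      - (P[fun ω => (π (X ω))⁻¹ * (A ω * ⟪e, ξ (Y ω)⟫)|m]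
        - P[fun ω => ((π (X ω))⁻¹ * ⟪e, β (X ω)⟫) * A ω|m]
        + P[fun ω => ⟪e, β (X ω)⟫|m])) :=
    (condExp_sub ((hg1.sub hg2).add hβhate) ((hg4.sub hg5).add hβe) m).trans
      (((condExp_add (hg1.sub hg2) hβhate m).trans
          ((condExp_sub hg1 hg2 m).add EventuallyEq.rfl)).sub
        ((condExp_add (hg4.sub hg5) hβe m).trans
          ((condExp_sub hg4 hg5 m).add EventuallyEq.rfl)))
  refine hL.trans ?_
  rw [hG3', hG6']
  filter_upwards [hG1', hG2', hG4', hG5', hA3] with ω h1 h2 h4 h5 hπω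
  simp only [Pi.sub_apply, Pi.add_apply, h1, h2, h4, h5]
  rw [real_inner_smul_right, inner_sub_right]
  have hπ0 : π (X ω) ≠ 0 := (lt_trans hε hπω.1).ne'
  have hπhat0 : πhat (X ω) ≠ 0 := (hπhatpos _).ne'
  field_simp
  ring
end

section
/- Let φ(Z) := (A/π(X))·(ξ(Y) − β(X)) + β(X) and φ̂(Z) := (A/π̂(X))·(ξ(Y) − β̂(X)) + β̂(X), where π̂: 𝒳 → [ε, 1−ε] is measurable and β̂: 𝒳 → H is Bochner measurable with E‖β̂(X)‖_H² < ∞ and E‖β(X)‖_H² < ∞. Then the bias of the doubly robust embedding obeys the product bound ‖E[φ̂(Z)] − E[φ(Z)]‖_H ≤ (1/ε) · (E[(π(X) − π̂(X))²])^{1/2} · (E[‖β(X) − β̂(X)‖_H²])^{1/2}. -/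
open MeasureTheory Filter Set

open scoped RealInnerProductSpace

/-- Pull-out + tower: `∫ g·f = ∫ g·E[f|m]` for `m`-measurable `g`. -/
private lemma aux_pull_mul {Ω : Type*} {m0 : MeasurableSpace Ω} {P : Measure Ω}
    [IsFiniteMeasure P] {m : MeasurableSpace Ω} (hm : m ≤ m0)
    (g f : Ω → ℝ) (hg : StronglyMeasurable[m] g)
    (hgf : Integrable (fun ω => g ω * f ω) P) (hf : Integrable f P) :
    ∫ ω, g ω * f ω ∂P = ∫ ω, g ω * (P[f|m]) ω ∂P := by
  haveI : SigmaFinite (P.trim hm) := inferInstance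
  have h := condExp_mul_of_stronglyMeasurable_left (μ := P) hg (by simpa [Pi.mul_def] using hgf) hf
  calc ∫ ω, g ω * f ω ∂P = ∫ ω, (P[fun ω => g ω * f ω|m]) ω ∂P :=
        (integral_condExp hm).symm
    _ = ∫ ω, g ω * (P[f|m]) ω ∂P := integral_congr_ae (by simpa [Pi.mul_def] using h)

/-- Cauchy–Schwarz for integrals of nonnegative functions. -/
private lemma aux_cauchy_schwarz {Ω : Type*} {m0 : MeasurableSpace Ω} {P : Measure Ω}
    {f g : Ω → ℝ} (hf : MemLp f 2 P) (hg : MemLp g 2 P)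
    (hf0 : 0 ≤ᵐ[P] f) (hg0 : 0 ≤ᵐ[P] g) :
    ∫ ω, f ω * g ω ∂P ≤ Real.sqrt (∫ ω, f ω ^ 2 ∂P) * Real.sqrt (∫ ω, g ω ^ 2 ∂P) := by
  have hpq : (2 : ℝ).HolderConjugate 2 := Real.holderConjugate_iff.mpr ⟨by norm_num, by norm_num⟩
  have hf' : MemLp f (ENNReal.ofReal 2) P := by
    rw [show ENNReal.ofReal 2 = 2 by simp [ENNReal.ofReal_ofNat]]; exact hf
  have hg' : MemLp g (ENNReal.ofReal 2) P := by
    rw [show ENNReal.ofReal 2 = 2 by simp [ENNReal.ofReal_ofNat]]; exact hg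
  have h := integral_mul_le_Lp_mul_Lq_of_nonneg hpq hf0 hg0 hf' hg'
  have hrpow : ∀ u : Ω → ℝ, (∫ ω, u ω ^ (2 : ℝ) ∂P) = ∫ ω, u ω ^ 2 ∂P := by
    intro u
    refine integral_congr_ae (ae_of_all _ fun ω => ?_)
    show u ω ^ (2 : ℝ) = u ω ^ 2
    rw [show (2 : ℝ) = ((2 : ℕ) : ℝ) by norm_num, Real.rpow_natCast]
  rw [hrpow f, hrpow g] at h
  calc ∫ ω, f ω * g ω ∂P
      ≤ (∫ ω, f ω ^ 2 ∂P) ^ (1 / (2 : ℝ)) * (∫ ω, g ω ^ 2 ∂P) ^ (1 / (2 : ℝ)) := h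
    _ = Real.sqrt (∫ ω, f ω ^ 2 ∂P) * Real.sqrt (∫ ω, g ω ^ 2 ∂P) := by
        rw [Real.sqrt_eq_rpow, Real.sqrt_eq_rpow]

private lemma aux_main {Ω : Type*} {m : MeasurableSpace Ω} [mΩ : MeasurableSpace Ω]
    (P : Measure Ω) [IsProbabilityMeasure P]
    {𝒳 : Type*} [MeasurableSpace 𝒳] {d : ℕ}
    {H : Type*} [NormedAddCommGroup H] [InnerProductSpace ℝ H] [CompleteSpace H]
    (X : Ω → 𝒳) (A : Ω → ℝ) (Y : Ω → (Fin d → ℝ))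
    (hm : m ≤ mΩ) (hXm : Measurable[m] X)
    (hA : Measurable A) (hYmeas : Measurable Y)
    (hA01 : ∀ ω, A ω = 0 ∨ A ω = 1)
    (π : 𝒳 → ℝ) (hπmeas : Measurable π)
    (hπ : (fun ω => π (X ω)) =ᵐ[P] P[A | m])
    (ε : ℝ) (hε : 0 < ε)
    (hA3 : ∀ᵐ ω ∂P, ε < π (X ω) ∧ π (X ω) < 1 - ε)
    (ξ : (Fin d → ℝ) → H) (hξ : StronglyMeasurable ξ)
    (hξint : Integrable (fun ω => ξ (Y ω)) P)
    (β : 𝒳 → H) (hβmeas : StronglyMeasurable β)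
    (hβsq : Integrable (fun ω => ‖β (X ω)‖ ^ 2) P)
    (hβ : (fun ω => π (X ω) • β (X ω)) =ᵐ[P] P[fun ω => A ω • ξ (Y ω) | m])
    (πhat : 𝒳 → ℝ) (hπhatmeas : Measurable πhat)
    (hπhatrange : ∀ x, πhat x ∈ Set.Icc ε (1 - ε))
    (βhat : 𝒳 → H) (hβhatmeas : StronglyMeasurable βhat)
    (hβhatsq : Integrable (fun ω => ‖βhat (X ω)‖ ^ 2) P) :
    ‖(∫ ω, ((A ω / πhat (X ω)) • (ξ (Y ω) - βhat (X ω)) + βhat (X ω)) ∂P)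
      - ∫ ω, ((A ω / π (X ω)) • (ξ (Y ω) - β (X ω)) + β (X ω)) ∂P‖
      ≤ (1 / ε) * Real.sqrt (∫ ω, (π (X ω) - πhat (X ω)) ^ 2 ∂P)
          * Real.sqrt (∫ ω, ‖β (X ω) - βhat (X ω)‖ ^ 2 ∂P) := by
  haveI hsf : SigmaFinite (P.trim hm) := inferInstance
  have hεinv : (0:ℝ) < ε⁻¹ := inv_pos.2 hε
  -- facts about A
  have hA0le : ∀ ω, 0 ≤ A ω ∧ A ω ≤ 1 := fun ω => by rcases hA01 ω with h | h <;> simp [h]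
  have hAabs : ∀ ω, |A ω| ≤ 1 := fun ω => abs_le.2 ⟨by linarith [(hA0le ω).1], (hA0le ω).2⟩
  have hAint : Integrable A P :=
    (integrable_const (1:ℝ)).mono' hA.aestronglyMeasurable
      (ae_of_all _ fun ω => by simpa using hAabs ω)
  -- measurability
  have hξY_sm : StronglyMeasurable (fun ω => ξ (Y ω)) := hξ.comp_measurable hYmeas
  have hβX_sm : StronglyMeasurable[m] (fun ω => β (X ω)) := hβmeas.comp_measurable hXm
  have hβhX_sm : StronglyMeasurable[m] (fun ω => βhat (X ω)) := hβhatmeas.comp_measurable hXm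
  have hπX_sm : StronglyMeasurable[m] (fun ω => π (X ω)) := (hπmeas.comp hXm).stronglyMeasurable
  have hπinvX_sm : StronglyMeasurable[m] (fun ω => (π (X ω))⁻¹) :=
    ((hπmeas.inv).comp hXm).stronglyMeasurable
  have hπhinvX_sm : StronglyMeasurable[m] (fun ω => (πhat (X ω))⁻¹) :=
    ((hπhatmeas.inv).comp hXm).stronglyMeasurable
  have hπXa : Measurable (fun ω => π (X ω)) := (hπmeas.comp hXm).mono hm le_rfl
  have hπhXa : Measurable (fun ω => πhat (X ω)) := (hπhatmeas.comp hXm).mono hm le_rfl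
  have hπinvXa : Measurable (fun ω => (π (X ω))⁻¹) := hπXa.inv
  have hπhinvXa : Measurable (fun ω => (πhat (X ω))⁻¹) := hπhXa.inv
  -- bounds on nuisances
  have hπh_pos : ∀ ω, 0 < πhat (X ω) := fun ω => lt_of_lt_of_le hε (hπhatrange (X ω)).1
  have hπhinv_abs : ∀ ω, |(πhat (X ω))⁻¹| ≤ ε⁻¹ := fun ω => by
    rw [abs_of_pos (inv_pos.2 (hπh_pos ω))]
    exact inv_anti₀ hε (hπhatrange (X ω)).1
  have hπ_pos_ae : ∀ᵐ ω ∂P, 0 < π (X ω) := by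
    filter_upwards [hA3] with ω hω; linarith [hω.1]
  have hπinv_abs_ae : ∀ᵐ ω ∂P, |(π (X ω))⁻¹| ≤ ε⁻¹ := by
    filter_upwards [hA3] with ω hω
    rw [abs_of_pos (inv_pos.2 (by linarith [hω.1]))]
    exact inv_anti₀ hε (le_of_lt hω.1)
  have hπ_abs_ae : ∀ᵐ ω ∂P, |π (X ω)| ≤ 1 := by
    filter_upwards [hA3] with ω hω
    rw [abs_le]; constructor <;> nlinarith [hω.1, hω.2, hε]
  -- integrability of β(X), βhat(X)
  have sq_dom : ∀ v : Ω → H, Integrable (fun ω => ‖v ω‖^2) P → AEStronglyMeasurable v P →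
      Integrable v P := by
    intro v hsq hvmeas
    refine ((integrable_const (1:ℝ)).add hsq).mono' hvmeas (ae_of_all _ fun ω => ?_)
    show ‖v ω‖ ≤ 1 + ‖v ω‖ ^ 2
    have h := norm_nonneg (v ω)
    nlinarith [sq_nonneg (‖v ω‖ - 1)]
  have hβXint : Integrable (fun ω => β (X ω)) P :=
    sq_dom _ hβsq (hβX_sm.mono hm).aestronglyMeasurable
  have hβhXint : Integrable (fun ω => βhat (X ω)) P :=
    sq_dom _ hβhatsq (hβhX_sm.mono hm).aestronglyMeasurable
  have hAξint : Integrable (fun ω => A ω • ξ (Y ω)) P := by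
    refine hξint.norm.mono' (hA.aestronglyMeasurable.smul hξY_sm.aestronglyMeasurable)
      (ae_of_all _ fun ω => ?_)
    rw [norm_smul]
    calc ‖A ω‖ * ‖ξ (Y ω)‖ ≤ 1 * ‖ξ (Y ω)‖ :=
          mul_le_mul_of_nonneg_right (by simpa using hAabs ω) (norm_nonneg _)
      _ = ‖ξ (Y ω)‖ := one_mul _
  -- a product of an a.e.-bounded function and an integrable function is integrable
  have bdd_mul : ∀ (g f : Ω → ℝ) (C : ℝ), AEStronglyMeasurable g P → Integrable f P →
      (∀ᵐ ω ∂P, |g ω| ≤ C) → Integrable (fun ω => g ω * f ω) P := by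
    intro g f C hg hf hC
    refine (hf.norm.const_mul C).mono' (hg.mul hf.aestronglyMeasurable) ?_
    filter_upwards [hC] with ω h
    have := mul_le_mul_of_nonneg_right h (norm_nonneg (f ω))
    simpa [Real.norm_eq_abs, abs_mul] using this
  -- the key conditional expectation identity, tested against c
  have hcond1 : ∀ c : H,
      (fun ω => π (X ω) * ⟪c, β (X ω)⟫) =ᵐ[P] P[fun ω => A ω * ⟪c, ξ (Y ω)⟫|m] := by
    intro c
    have hf_int : Integrable (fun ω => A ω * ⟪c, ξ (Y ω)⟫) P := by
      refine bdd_mul _ _ 1 hA.aestronglyMeasurable ?_ (ae_of_all _ hAabs)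
      exact (hξint.norm.const_mul ‖c‖).mono'
        (aestronglyMeasurable_const.inner hξY_sm.aestronglyMeasurable)
        (ae_of_all _ fun ω => norm_inner_le_norm _ _)
    have hg_int : Integrable (fun ω => π (X ω) * ⟪c, β (X ω)⟫) P := by
      refine bdd_mul _ _ 1 hπXa.aestronglyMeasurable ?_ hπ_abs_ae
      exact (hβXint.norm.const_mul ‖c‖).mono'
        (aestronglyMeasurable_const.inner (hβX_sm.mono hm).aestronglyMeasurable)
        (ae_of_all _ fun ω => norm_inner_le_norm _ _)
    have hπβint : Integrable (fun ω => π (X ω) • β (X ω)) P := by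
      refine hβXint.norm.mono'
        (hπXa.aestronglyMeasurable.smul (hβX_sm.mono hm).aestronglyMeasurable) ?_
      filter_upwards [hπ_abs_ae] with ω hω
      rw [norm_smul]
      calc ‖π (X ω)‖ * ‖β (X ω)‖ ≤ 1 * ‖β (X ω)‖ :=
            mul_le_mul_of_nonneg_right (by simpa [Real.norm_eq_abs] using hω) (norm_nonneg _)
        _ = ‖β (X ω)‖ := one_mul _
    refine ae_eq_condExp_of_forall_setIntegral_eq hm hf_int
      (fun s _ _ => hg_int.integrableOn) (fun s hs _ => ?_) ?_
    · have hset : ∫ ω in s, π (X ω) • β (X ω) ∂P = ∫ ω in s, A ω • ξ (Y ω) ∂P := by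
        rw [setIntegral_congr_ae (hm s hs) (hβ.mono fun ω h _ => h)]
        exact setIntegral_condExp hm hAξint hs
      calc ∫ ω in s, π (X ω) * ⟪c, β (X ω)⟫ ∂P
          = ∫ ω in s, ⟪c, π (X ω) • β (X ω)⟫ ∂P := by
            simp_rw [real_inner_smul_right]
        _ = ⟪c, ∫ ω in s, π (X ω) • β (X ω) ∂P⟫ := integral_inner hπβint.integrableOn c
        _ = ⟪c, ∫ ω in s, A ω • ξ (Y ω) ∂P⟫ := by rw [hset]
        _ = ∫ ω in s, ⟪c, A ω • ξ (Y ω)⟫ ∂P := (integral_inner hAξint.integrableOn c).symm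
        _ = ∫ ω in s, A ω * ⟪c, ξ (Y ω)⟫ ∂P := by simp_rw [real_inner_smul_right]
    · exact (hπX_sm.mul (stronglyMeasurable_const.inner hβX_sm)).aestronglyMeasurable
  -- integrability of the three vector-valued integrands
  have hφhat_int : Integrable
      (fun ω => (A ω / πhat (X ω)) • (ξ (Y ω) - βhat (X ω)) + βhat (X ω)) P := by
    refine Integrable.mono' (((hξint.norm.add hβhXint.norm).const_mul ε⁻¹).add hβhXint.norm)
      (((hA.div hπhXa).aestronglyMeasurable.smul
        (hξY_sm.aestronglyMeasurable.sub (hβhX_sm.mono hm).aestronglyMeasurable)).add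
        (hβhX_sm.mono hm).aestronglyMeasurable) (ae_of_all _ fun ω => ?_)
    have h1 : |A ω / πhat (X ω)| ≤ ε⁻¹ := by
      rw [abs_div, abs_of_pos (hπh_pos ω)]
      calc |A ω| / πhat (X ω) ≤ 1 / ε :=
            div_le_div₀ (by norm_num) (hAabs ω) hε (hπhatrange (X ω)).1
        _ = ε⁻¹ := one_div ε
    show ‖(A ω / πhat (X ω)) • (ξ (Y ω) - βhat (X ω)) + βhat (X ω)‖
        ≤ ε⁻¹ * (‖ξ (Y ω)‖ + ‖βhat (X ω)‖) + ‖βhat (X ω)‖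
    calc ‖(A ω / πhat (X ω)) • (ξ (Y ω) - βhat (X ω)) + βhat (X ω)‖
        ≤ ‖(A ω / πhat (X ω)) • (ξ (Y ω) - βhat (X ω))‖ + ‖βhat (X ω)‖ := norm_add_le _ _
      _ ≤ ε⁻¹ * (‖ξ (Y ω)‖ + ‖βhat (X ω)‖) + ‖βhat (X ω)‖ := by
          rw [norm_smul]
          have h3 := norm_sub_le (ξ (Y ω)) (βhat (X ω))
          have h2 : ‖A ω / πhat (X ω)‖ * ‖ξ (Y ω) - βhat (X ω)‖
              ≤ ε⁻¹ * (‖ξ (Y ω)‖ + ‖βhat (X ω)‖) :=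
            mul_le_mul (by rw [Real.norm_eq_abs]; exact h1) h3 (norm_nonneg _)
              (le_of_lt hεinv)
          linarith
  have hφ_int : Integrable
      (fun ω => (A ω / π (X ω)) • (ξ (Y ω) - β (X ω)) + β (X ω)) P := by
    refine Integrable.mono' (((hξint.norm.add hβXint.norm).const_mul ε⁻¹).add hβXint.norm)
      (((hA.div hπXa).aestronglyMeasurable.smul
        (hξY_sm.aestronglyMeasurable.sub (hβX_sm.mono hm).aestronglyMeasurable)).add
        (hβX_sm.mono hm).aestronglyMeasurable) ?_
    filter_upwards [hA3] with ω hω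
    have h1 : |A ω / π (X ω)| ≤ ε⁻¹ := by
      rw [abs_div, abs_of_pos (by linarith [hω.1] : (0:ℝ) < π (X ω))]
      calc |A ω| / π (X ω) ≤ 1 / ε := div_le_div₀ (by norm_num) (hAabs ω) hε (le_of_lt hω.1)
        _ = ε⁻¹ := one_div ε
    show ‖(A ω / π (X ω)) • (ξ (Y ω) - β (X ω)) + β (X ω)‖
        ≤ ε⁻¹ * (‖ξ (Y ω)‖ + ‖β (X ω)‖) + ‖β (X ω)‖
    calc ‖(A ω / π (X ω)) • (ξ (Y ω) - β (X ω)) + β (X ω)‖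
        ≤ ‖(A ω / π (X ω)) • (ξ (Y ω) - β (X ω))‖ + ‖β (X ω)‖ := norm_add_le _ _
      _ ≤ ε⁻¹ * (‖ξ (Y ω)‖ + ‖β (X ω)‖) + ‖β (X ω)‖ := by
          rw [norm_smul]
          have h3 := norm_sub_le (ξ (Y ω)) (β (X ω))
          have h2 : ‖A ω / π (X ω)‖ * ‖ξ (Y ω) - β (X ω)‖
              ≤ ε⁻¹ * (‖ξ (Y ω)‖ + ‖β (X ω)‖) :=
            mul_le_mul (by rw [Real.norm_eq_abs]; exact h1) h3 (norm_nonneg _)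
              (le_of_lt hεinv)
          linarith
  have hd_abs_ae : ∀ᵐ ω ∂P, |π (X ω) - πhat (X ω)| ≤ 1 := by
    filter_upwards [hA3] with ω hω
    have h1 := (hπhatrange (X ω)).1
    have h2 := (hπhatrange (X ω)).2
    rw [abs_le]; constructor <;> nlinarith [hω.1, hω.2, hε]
  have hrw_int : Integrable
      (fun ω => ((π (X ω) - πhat (X ω)) / πhat (X ω)) • (β (X ω) - βhat (X ω))) P := by
    refine Integrable.mono' ((hβXint.norm.add hβhXint.norm).const_mul ε⁻¹)
      (((hπXa.sub hπhXa).div hπhXa).aestronglyMeasurable.smul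
        ((hβX_sm.mono hm).aestronglyMeasurable.sub (hβhX_sm.mono hm).aestronglyMeasurable)) ?_
    filter_upwards [hd_abs_ae] with ω hd
    have h1 : |(π (X ω) - πhat (X ω)) / πhat (X ω)| ≤ ε⁻¹ := by
      rw [abs_div, abs_of_pos (hπh_pos ω)]
      calc |π (X ω) - πhat (X ω)| / πhat (X ω) ≤ 1 / ε :=
            div_le_div₀ (by norm_num) hd hε (hπhatrange (X ω)).1
        _ = ε⁻¹ := one_div ε
    show ‖((π (X ω) - πhat (X ω)) / πhat (X ω)) • (β (X ω) - βhat (X ω))‖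
        ≤ ε⁻¹ * (‖β (X ω)‖ + ‖βhat (X ω)‖)
    rw [norm_smul, Real.norm_eq_abs]
    exact mul_le_mul h1 (norm_sub_le _ _) (norm_nonneg _) (le_of_lt hεinv)
  -- the key identity
  have hkey : ((∫ ω, ((A ω / πhat (X ω)) • (ξ (Y ω) - βhat (X ω)) + βhat (X ω)) ∂P)
      - ∫ ω, ((A ω / π (X ω)) • (ξ (Y ω) - β (X ω)) + β (X ω)) ∂P)
      = ∫ ω, ((π (X ω) - πhat (X ω)) / πhat (X ω)) • (β (X ω) - βhat (X ω)) ∂P := by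
    refine ext_inner_left ℝ fun c => ?_
    rw [inner_sub_right, ← integral_inner hφhat_int c, ← integral_inner hφ_int c,
      ← integral_inner hrw_int c]
    have hu_int : Integrable (fun ω => ⟪c, ξ (Y ω)⟫) P :=
      (hξint.norm.const_mul ‖c‖).mono'
        (aestronglyMeasurable_const.inner hξY_sm.aestronglyMeasurable)
        (ae_of_all _ fun ω => norm_inner_le_norm _ _)
    have hb_int : Integrable (fun ω => ⟪c, β (X ω)⟫) P :=
      (hβXint.norm.const_mul ‖c‖).mono'
        (aestronglyMeasurable_const.inner (hβX_sm.mono hm).aestronglyMeasurable)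
        (ae_of_all _ fun ω => norm_inner_le_norm _ _)
    have hbh_int : Integrable (fun ω => ⟪c, βhat (X ω)⟫) P :=
      (hβhXint.norm.const_mul ‖c‖).mono'
        (aestronglyMeasurable_const.inner (hβhX_sm.mono hm).aestronglyMeasurable)
        (ae_of_all _ fun ω => norm_inner_le_norm _ _)
    have hb_sm : StronglyMeasurable[m] (fun ω => ⟪c, β (X ω)⟫) :=
      stronglyMeasurable_const.inner hβX_sm
    have hbh_sm : StronglyMeasurable[m] (fun ω => ⟪c, βhat (X ω)⟫) :=
      stronglyMeasurable_const.inner hβhX_sm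
    have hAu_int : Integrable (fun ω => A ω * ⟪c, ξ (Y ω)⟫) P :=
      bdd_mul A _ 1 hA.aestronglyMeasurable hu_int (ae_of_all _ hAabs)
    -- I1 : ∫ π̂⁻¹ (A u) = ∫ π̂⁻¹ (π b)
    have hint1 : Integrable (fun ω => (πhat (X ω))⁻¹ * (A ω * ⟪c, ξ (Y ω)⟫)) P :=
      bdd_mul _ _ ε⁻¹ hπhinvXa.aestronglyMeasurable hAu_int (ae_of_all _ hπhinv_abs)
    have I1 : ∫ ω, (πhat (X ω))⁻¹ * (A ω * ⟪c, ξ (Y ω)⟫) ∂P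
        = ∫ ω, (πhat (X ω))⁻¹ * (π (X ω) * ⟪c, β (X ω)⟫) ∂P := by
      rw [aux_pull_mul hm (fun ω => (πhat (X ω))⁻¹) (fun ω => A ω * ⟪c, ξ (Y ω)⟫)
        hπhinvX_sm hint1 hAu_int]
      refine integral_congr_ae ?_
      filter_upwards [hcond1 c] with ω h
      exact congrArg (fun t => (πhat (X ω))⁻¹ * t) h.symm
    -- I2 : ∫ (π̂⁻¹ bh) A = ∫ (π̂⁻¹ bh) π
    have hg2_int : Integrable (fun ω => (πhat (X ω))⁻¹ * ⟪c, βhat (X ω)⟫) P :=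
      bdd_mul _ _ ε⁻¹ hπhinvXa.aestronglyMeasurable hbh_int (ae_of_all _ hπhinv_abs)
    have hint2 : Integrable (fun ω => ((πhat (X ω))⁻¹ * ⟪c, βhat (X ω)⟫) * A ω) P := by
      have h := bdd_mul A (fun ω => (πhat (X ω))⁻¹ * ⟪c, βhat (X ω)⟫) 1
        hA.aestronglyMeasurable hg2_int (ae_of_all _ hAabs)
      exact h.congr (ae_of_all _ fun ω => mul_comm _ _)
    have I2 : ∫ ω, ((πhat (X ω))⁻¹ * ⟪c, βhat (X ω)⟫) * A ω ∂P
        = ∫ ω, ((πhat (X ω))⁻¹ * ⟪c, βhat (X ω)⟫) * π (X ω) ∂P := by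
      rw [aux_pull_mul hm (fun ω => (πhat (X ω))⁻¹ * ⟪c, βhat (X ω)⟫) A
        (hπhinvX_sm.mul hbh_sm) hint2 hAint]
      refine integral_congr_ae ?_
      filter_upwards [hπ] with ω h
      exact congrArg (fun t => ((πhat (X ω))⁻¹ * ⟪c, βhat (X ω)⟫) * t) h.symm
    -- I3 : ∫ π⁻¹ (A u) = ∫ b
    have hint3 : Integrable (fun ω => (π (X ω))⁻¹ * (A ω * ⟪c, ξ (Y ω)⟫)) P :=
      bdd_mul _ _ ε⁻¹ hπinvXa.aestronglyMeasurable hAu_int hπinv_abs_ae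
    have I3 : ∫ ω, (π (X ω))⁻¹ * (A ω * ⟪c, ξ (Y ω)⟫) ∂P = ∫ ω, ⟪c, β (X ω)⟫ ∂P := by
      rw [aux_pull_mul hm (fun ω => (π (X ω))⁻¹) (fun ω => A ω * ⟪c, ξ (Y ω)⟫)
        hπinvX_sm hint3 hAu_int]
      refine integral_congr_ae ?_
      filter_upwards [hcond1 c, hπ_pos_ae] with ω h hpos
      have h' : (P[fun ω => A ω * ⟪c, ξ (Y ω)⟫|m]) ω = π (X ω) * ⟪c, β (X ω)⟫ := h.symm
      show (π (X ω))⁻¹ * (P[fun ω => A ω * ⟪c, ξ (Y ω)⟫|m]) ω = ⟪c, β (X ω)⟫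
      rw [h', inv_mul_cancel_left₀ (ne_of_gt hpos)]
    -- I4 : ∫ (π⁻¹ b) A = ∫ b
    have hg4_int : Integrable (fun ω => (π (X ω))⁻¹ * ⟪c, β (X ω)⟫) P :=
      bdd_mul _ _ ε⁻¹ hπinvXa.aestronglyMeasurable hb_int hπinv_abs_ae
    have hint4 : Integrable (fun ω => ((π (X ω))⁻¹ * ⟪c, β (X ω)⟫) * A ω) P := by
      have h := bdd_mul A (fun ω => (π (X ω))⁻¹ * ⟪c, β (X ω)⟫) 1
        hA.aestronglyMeasurable hg4_int (ae_of_all _ hAabs)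
      exact h.congr (ae_of_all _ fun ω => mul_comm _ _)
    have I4 : ∫ ω, ((π (X ω))⁻¹ * ⟪c, β (X ω)⟫) * A ω ∂P = ∫ ω, ⟪c, β (X ω)⟫ ∂P := by
      rw [aux_pull_mul hm (fun ω => (π (X ω))⁻¹ * ⟪c, β (X ω)⟫) A
        (hπinvX_sm.mul hb_sm) hint4 hAint]
      refine integral_congr_ae ?_
      filter_upwards [hπ, hπ_pos_ae] with ω h hpos
      have h' : (P[A|m]) ω = π (X ω) := h.symm
      show ((π (X ω))⁻¹ * ⟪c, β (X ω)⟫) * (P[A|m]) ω = ⟪c, β (X ω)⟫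
      rw [h']
      have hne : π (X ω) ≠ 0 := ne_of_gt hpos
      field_simp
    -- expand ∫ ⟪c, φ̂⟫
    have hφhat_eq : ∫ ω, ⟪c, (A ω / πhat (X ω)) • (ξ (Y ω) - βhat (X ω)) + βhat (X ω)⟫ ∂P
        = (∫ ω, (πhat (X ω))⁻¹ * (A ω * ⟪c, ξ (Y ω)⟫) ∂P)
          - (∫ ω, ((πhat (X ω))⁻¹ * ⟪c, βhat (X ω)⟫) * A ω ∂P)
          + ∫ ω, ⟪c, βhat (X ω)⟫ ∂P := by
      have h12 : Integrable (fun ω => (πhat (X ω))⁻¹ * (A ω * ⟪c, ξ (Y ω)⟫)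
          - ((πhat (X ω))⁻¹ * ⟪c, βhat (X ω)⟫) * A ω) P := hint1.sub hint2
      rw [← integral_sub hint1 hint2, ← integral_add h12 hbh_int]
      refine integral_congr_ae (ae_of_all _ fun ω => ?_)
      simp only [inner_add_right, inner_sub_right, real_inner_smul_right, div_eq_mul_inv]
      ring
    -- expand ∫ ⟪c, φ⟫
    have hφ_eq : ∫ ω, ⟪c, (A ω / π (X ω)) • (ξ (Y ω) - β (X ω)) + β (X ω)⟫ ∂P
        = (∫ ω, (π (X ω))⁻¹ * (A ω * ⟪c, ξ (Y ω)⟫) ∂P)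
          - (∫ ω, ((π (X ω))⁻¹ * ⟪c, β (X ω)⟫) * A ω ∂P)
          + ∫ ω, ⟪c, β (X ω)⟫ ∂P := by
      have h34 : Integrable (fun ω => (π (X ω))⁻¹ * (A ω * ⟪c, ξ (Y ω)⟫)
          - ((π (X ω))⁻¹ * ⟪c, β (X ω)⟫) * A ω) P := hint3.sub hint4
      rw [← integral_sub hint3 hint4, ← integral_add h34 hb_int]
      refine integral_congr_ae (ae_of_all _ fun ω => ?_)
      simp only [inner_add_right, inner_sub_right, real_inner_smul_right, div_eq_mul_inv]
      ring
    -- expand ∫ ⟪c, r • w⟫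
    have ht1_int : Integrable (fun ω => (πhat (X ω))⁻¹ * (π (X ω) * ⟪c, β (X ω)⟫)) P := by
      refine bdd_mul _ _ ε⁻¹ hπhinvXa.aestronglyMeasurable ?_ (ae_of_all _ hπhinv_abs)
      exact bdd_mul _ _ 1 hπXa.aestronglyMeasurable hb_int hπ_abs_ae
    have ht2_int : Integrable (fun ω => ((πhat (X ω))⁻¹ * ⟪c, βhat (X ω)⟫) * π (X ω)) P := by
      have h := bdd_mul (fun ω => π (X ω)) (fun ω => (πhat (X ω))⁻¹ * ⟪c, βhat (X ω)⟫) 1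
        hπXa.aestronglyMeasurable hg2_int hπ_abs_ae
      exact h.congr (ae_of_all _ fun ω => mul_comm _ _)
    have hrw_eq : ∫ ω, ⟪c, ((π (X ω) - πhat (X ω)) / πhat (X ω)) • (β (X ω) - βhat (X ω))⟫ ∂P
        = (∫ ω, (πhat (X ω))⁻¹ * (π (X ω) * ⟪c, β (X ω)⟫) ∂P)
          - (∫ ω, ((πhat (X ω))⁻¹ * ⟪c, βhat (X ω)⟫) * π (X ω) ∂P)
          - (∫ ω, ⟪c, β (X ω)⟫ ∂P) + ∫ ω, ⟪c, βhat (X ω)⟫ ∂P := by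
      have ht12 : Integrable (fun ω => (πhat (X ω))⁻¹ * (π (X ω) * ⟪c, β (X ω)⟫)
          - ((πhat (X ω))⁻¹ * ⟪c, βhat (X ω)⟫) * π (X ω)) P := ht1_int.sub ht2_int
      have ht123 : Integrable (fun ω => ((πhat (X ω))⁻¹ * (π (X ω) * ⟪c, β (X ω)⟫)
          - ((πhat (X ω))⁻¹ * ⟪c, βhat (X ω)⟫) * π (X ω)) - ⟪c, β (X ω)⟫) P :=
        ht12.sub hb_int
      rw [← integral_sub ht1_int ht2_int, ← integral_sub ht12 hb_int,
        ← integral_add ht123 hbh_int]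
      refine integral_congr_ae (ae_of_all _ fun ω => ?_)
      have hne : πhat (X ω) ≠ 0 := ne_of_gt (hπh_pos ω)
      simp only [inner_sub_right, real_inner_smul_right]
      field_simp
      ring
    rw [hφhat_eq, hφ_eq, hrw_eq, I1, I2, I3, I4]
    ring
  rw [hkey]
  -- the norm bound
  have hw_sm : AEStronglyMeasurable (fun ω => β (X ω) - βhat (X ω)) P :=
    (hβX_sm.mono hm).aestronglyMeasurable.sub (hβhX_sm.mono hm).aestronglyMeasurable
  have hwn_int : Integrable (fun ω => ‖β (X ω) - βhat (X ω)‖) P := by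
    refine (hβXint.norm.add hβhXint.norm).mono' hw_sm.norm (ae_of_all _ fun ω => ?_)
    simpa using norm_sub_le (β (X ω)) (βhat (X ω))
  have hdmeas : AEStronglyMeasurable (fun ω => |π (X ω) - πhat (X ω)|) P :=
    ((hπXa.sub hπhXa).abs).aestronglyMeasurable
  have hdL2 : MemLp (fun ω => |π (X ω) - πhat (X ω)|) 2 P := by
    refine MemLp.of_bound hdmeas 1 ?_
    filter_upwards [hd_abs_ae] with ω h
    simpa [Real.norm_eq_abs, abs_abs] using h
  have hwsq_meas : AEStronglyMeasurable (fun ω => ‖β (X ω) - βhat (X ω)‖ ^ 2) P := by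
    simpa [sq, Pi.mul_def] using hw_sm.norm.mul hw_sm.norm
  have hwsq_int : Integrable (fun ω => ‖β (X ω) - βhat (X ω)‖ ^ 2) P := by
    refine ((hβsq.const_mul 2).add (hβhatsq.const_mul 2)).mono' hwsq_meas
      (ae_of_all _ fun ω => ?_)
    have h := norm_sub_le (β (X ω)) (βhat (X ω))
    show ‖‖β (X ω) - βhat (X ω)‖ ^ 2‖ ≤ 2 * ‖β (X ω)‖ ^ 2 + 2 * ‖βhat (X ω)‖ ^ 2
    rw [Real.norm_eq_abs, abs_of_nonneg (by positivity)]
    nlinarith [norm_nonneg (β (X ω)), norm_nonneg (βhat (X ω)),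
      norm_nonneg (β (X ω) - βhat (X ω)), sq_nonneg (‖β (X ω)‖ - ‖βhat (X ω)‖)]
  have hwL2 : MemLp (fun ω => ‖β (X ω) - βhat (X ω)‖) 2 P :=
    (memLp_two_iff_integrable_sq hw_sm.norm).2 hwsq_int
  have hcs := aux_cauchy_schwarz hdL2 hwL2
    (ae_of_all _ fun ω => abs_nonneg _) (ae_of_all _ fun ω => norm_nonneg _)
  have hprod_int : Integrable (fun ω => |π (X ω) - πhat (X ω)| * ‖β (X ω) - βhat (X ω)‖) P := by
    refine bdd_mul _ _ 1 hdmeas hwn_int ?_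
    filter_upwards [hd_abs_ae] with ω h
    simpa [abs_abs] using h
  calc ‖∫ ω, ((π (X ω) - πhat (X ω)) / πhat (X ω)) • (β (X ω) - βhat (X ω)) ∂P‖
      ≤ ∫ ω, ‖((π (X ω) - πhat (X ω)) / πhat (X ω)) • (β (X ω) - βhat (X ω))‖ ∂P :=
        norm_integral_le_integral_norm _
    _ ≤ ∫ ω, ε⁻¹ * (|π (X ω) - πhat (X ω)| * ‖β (X ω) - βhat (X ω)‖) ∂P := by
        refine integral_mono_ae hrw_int.norm (hprod_int.const_mul ε⁻¹) (ae_of_all _ fun ω => ?_)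
        have h1 : |(π (X ω) - πhat (X ω)) / πhat (X ω)| ≤ ε⁻¹ * |π (X ω) - πhat (X ω)| := by
          rw [abs_div, abs_of_pos (hπh_pos ω), div_eq_inv_mul]
          exact mul_le_mul_of_nonneg_right (inv_anti₀ hε (hπhatrange (X ω)).1) (abs_nonneg _)
        calc ‖((π (X ω) - πhat (X ω)) / πhat (X ω)) • (β (X ω) - βhat (X ω))‖
            = |(π (X ω) - πhat (X ω)) / πhat (X ω)| * ‖β (X ω) - βhat (X ω)‖ := by
              rw [norm_smul, Real.norm_eq_abs]
          _ ≤ (ε⁻¹ * |π (X ω) - πhat (X ω)|) * ‖β (X ω) - βhat (X ω)‖ :=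
              mul_le_mul_of_nonneg_right h1 (norm_nonneg _)
          _ = ε⁻¹ * (|π (X ω) - πhat (X ω)| * ‖β (X ω) - βhat (X ω)‖) := mul_assoc _ _ _
    _ = ε⁻¹ * ∫ ω, |π (X ω) - πhat (X ω)| * ‖β (X ω) - βhat (X ω)‖ ∂P :=
        integral_const_mul ε⁻¹ _
    _ ≤ ε⁻¹ * (Real.sqrt (∫ ω, |π (X ω) - πhat (X ω)| ^ 2 ∂P)
          * Real.sqrt (∫ ω, ‖β (X ω) - βhat (X ω)‖ ^ 2 ∂P)) :=
        mul_le_mul_of_nonneg_left hcs (le_of_lt hεinv)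
    _ = (1 / ε) * Real.sqrt (∫ ω, (π (X ω) - πhat (X ω)) ^ 2 ∂P)
          * Real.sqrt (∫ ω, ‖β (X ω) - βhat (X ω)‖ ^ 2 ∂P) := by
        rw [one_div]
        have habs2 : (∫ ω, |π (X ω) - πhat (X ω)| ^ 2 ∂P)
            = ∫ ω, (π (X ω) - πhat (X ω)) ^ 2 ∂P :=
          integral_congr_ae (ae_of_all _ fun ω => sq_abs _)
        rw [habs2, mul_assoc]


/-- Product bias bound for the doubly robust embedding:
`‖E[φ̂(Z)] − E[φ(Z)]‖ ≤ (1/ε)·(E[(π(X)−π̂(X))²])^{1/2}·(E[‖β(X)−β̂(X)‖²])^{1/2}`. -/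
theorem dr_embedding_product_bias_bound
    {Ω : Type*} [MeasurableSpace Ω] (P : Measure Ω) [IsProbabilityMeasure P]
    {𝒳 : Type*} [MeasurableSpace 𝒳]
    {d : ℕ}
    {H : Type*} [NormedAddCommGroup H] [InnerProductSpace ℝ H] [CompleteSpace H]
    [TopologicalSpace.SeparableSpace H]
    -- random elements
    (X : Ω → 𝒳) (A : Ω → ℝ) (Y0 Y1 Y : Ω → (Fin d → ℝ))
    (hX : Measurable X) (hA : Measurable A) (hY0 : Measurable Y0) (hY1 : Measurable Y1)
    (hA01 : ∀ ω, A ω = 0 ∨ A ω = 1)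
    -- Condition A1: the observed outcome
    (hA1 : ∀ ω, Y ω = A ω • Y1 ω + (1 - A ω) • Y0 ω)
    -- Condition A2: σ(Y⁰,Y¹) ⟂ σ(A) conditionally on σ(X)
    (hA2 : ∀ s t : Set Ω,
      MeasurableSet[MeasurableSpace.comap (fun ω => (Y0 ω, Y1 ω)) inferInstance] s →
      MeasurableSet[MeasurableSpace.comap A inferInstance] t →
      (P[(s ∩ t).indicator (fun _ => (1 : ℝ)) | MeasurableSpace.comap X inferInstance])
        =ᵐ[P] fun ω =>
          ((P[s.indicator (fun _ => (1 : ℝ)) | MeasurableSpace.comap X inferInstance]) ω) *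
          ((P[t.indicator (fun _ => (1 : ℝ)) | MeasurableSpace.comap X inferInstance]) ω))
    -- the propensity score π(X) := E[A | X]
    (π : 𝒳 → ℝ) (hπmeas : Measurable π)
    (hπ : (fun ω => π (X ω)) =ᵐ[P] P[A | MeasurableSpace.comap X inferInstance])
    -- Condition A3: ε < π(X) < 1 − ε almost surely
    (ε : ℝ) (hε : 0 < ε)
    (hA3 : ∀ᵐ ω ∂P, ε < π (X ω) ∧ π (X ω) < 1 - ε)
    -- Bochner-measurable feature map with E‖ξ(Y)‖ < ∞
    (ξ : (Fin d → ℝ) → H) (hξ : StronglyMeasurable ξ)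
    (hξint : Integrable (fun ω => ξ (Y ω)) P)
    -- σ(X)-measurable β with π(X)·β(X) = E[A·ξ(Y) | X] a.s. and E‖β(X)‖² < ∞
    (β : 𝒳 → H) (hβmeas : StronglyMeasurable β)
    (hβsq : Integrable (fun ω => ‖β (X ω)‖ ^ 2) P)
    (hβ : (fun ω => π (X ω) • β (X ω))
        =ᵐ[P] P[fun ω => A ω • ξ (Y ω) | MeasurableSpace.comap X inferInstance])
    -- measurable nuisance estimates π̂ : 𝒳 → [ε, 1−ε] and β̂ with E‖β̂(X)‖² < ∞
    (πhat : 𝒳 → ℝ) (hπhatmeas : Measurable πhat)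
    (hπhatrange : ∀ x, πhat x ∈ Set.Icc ε (1 - ε))
    (βhat : 𝒳 → H) (hβhatmeas : StronglyMeasurable βhat)
    (hβhatsq : Integrable (fun ω => ‖βhat (X ω)‖ ^ 2) P) :
    ‖(∫ ω, ((A ω / πhat (X ω)) • (ξ (Y ω) - βhat (X ω)) + βhat (X ω)) ∂P)
      - ∫ ω, ((A ω / π (X ω)) • (ξ (Y ω) - β (X ω)) + β (X ω)) ∂P‖
      ≤ (1 / ε) * Real.sqrt (∫ ω, (π (X ω) - πhat (X ω)) ^ 2 ∂P)
          * Real.sqrt (∫ ω, ‖β (X ω) - βhat (X ω)‖ ^ 2 ∂P) := by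
  have hYmeas : Measurable Y := by
    have h : Y = fun ω => A ω • Y1 ω + (1 - A ω) • Y0 ω := funext hA1
    rw [h]; exact (hA.smul hY1).add ((measurable_const.sub hA).smul hY0)
  exact aux_main P X A Y hX.comap_le (Measurable.of_comap_le le_rfl) hA hYmeas hA01
    π hπmeas hπ ε hε hA3 ξ hξ hξint β hβmeas hβsq hβ
    πhat hπhatmeas hπhatrange βhat hβhatmeas hβhatsq
end
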